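/- (Root expansions for the shifted dispersion relation.) There exist δ₀ ∈ (0, 1/√(12α)), γ₀ > 0, and C > 0 with the following property: for each real δ with 0 < |δ| < δ₀ and each γ ∈ ℂ with |γ| < γ₀, the quartic polynomial ν ↦ d_{c_*(δ)}(γ², −η_*(δ) + ν) has exactly four roots ν₁, ν₂, ν₃, ν₄ (listed with multiplicity) which satisfy |ν₁ + 1/|δ|| ≤ C, |ν₄ − 1/|δ|| ≤ C, |ν₂ + γ| ≤ C(|δ||γ| + |γ|²), and |ν₃ − γ| ≤ C(|δ||γ| + |γ|²). Moreover ν₂ and ν₃ can be chosen as functions of (δ, γ), defined and continuous on (−δ₀, δ₀) × {|γ| < γ₀}, which are roots of this quartic and satisfy the stated bounds. -/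

import Mathlib

noncomputable def etaStar (α δ : ℝ) : ℝ :=
  if δ = 0 then Real.sqrt α
  else 1 / (|δ| * Real.sqrt 6) * Real.sqrt (1 - Real.sqrt (1 - 12 * δ ^ 2 * α))

noncomputable def cStar (α δ : ℝ) : ℝ :=
  2 * etaStar α δ - 4 * δ ^ 2 * etaStar α δ ^ 3

/-- The dispersion relation at `+∞`: `d_c(λ, ν) = -δ²ν⁴ + ν² + cν + α - λ`. -/
noncomputable def disp (α δ c : ℝ) (lam ν : ℂ) : ℂ :=
  -(δ : ℂ) ^ 2 * ν ^ 4 + ν ^ 2 + (c : ℂ) * ν + (α : ℂ) - lam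

noncomputable def csqrt (z : ℂ) : ℂ := Complex.exp (((1:ℝ)/2 : ℝ) * Complex.log z)
noncomputable def invsqrt (z : ℂ) : ℂ := Complex.exp ((-(1/2) : ℝ) * Complex.log z)

lemma csqrt_sq {z : ℂ} (hz : z ≠ 0) : csqrt z ^ 2 = z := by
  rw [csqrt, sq, ← Complex.exp_add]
  rw [show (((1:ℝ)/2 : ℝ) : ℂ) * Complex.log z + (((1:ℝ)/2 : ℝ):ℂ) * Complex.log z
      = Complex.log z by push_cast; ring]
  exact Complex.exp_log hz

lemma invsqrt_sq {z : ℂ} (hz : z ≠ 0) : invsqrt z ^ 2 = z⁻¹ := by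
  rw [invsqrt, sq, ← Complex.exp_add]
  rw [show ((-(1/2):ℝ) : ℂ) * Complex.log z + ((-(1/2):ℝ):ℂ) * Complex.log z
      = -Complex.log z by push_cast; ring]
  rw [Complex.exp_neg, Complex.exp_log hz]

lemma csqrt_re_nonneg (z : ℂ) : 0 ≤ (csqrt z).re := by
  rw [csqrt, Complex.exp_re, Complex.im_ofReal_mul, Complex.log_im]
  have h1 := Complex.arg_le_pi z
  have h2 := Complex.neg_pi_lt_arg z
  have hc : 0 ≤ Real.cos (1/2 * Complex.arg z) :=
    Real.cos_nonneg_of_mem_Icc ⟨by linarith, by linarith⟩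
  positivity

lemma invsqrt_re_nonneg (z : ℂ) : 0 ≤ (invsqrt z).re := by
  rw [invsqrt, Complex.exp_re, Complex.im_ofReal_mul, Complex.log_im]
  have h1 := Complex.arg_le_pi z
  have h2 := Complex.neg_pi_lt_arg z
  have hc : 0 ≤ Real.cos (-(1/2) * Complex.arg z) :=
    Real.cos_nonneg_of_mem_Icc ⟨by linarith, by linarith⟩
  positivity

/-- `|√z - 1| ≤ |z - 1|` for any `z ≠ 0`. -/
lemma csqrt_sub_one {z : ℂ} (hz : z ≠ 0) :
    ‖(csqrt z - 1)‖ ≤ ‖(z - 1)‖ := by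
  have key : (csqrt z - 1) * (csqrt z + 1) = z - 1 := by
    have h := csqrt_sq hz; linear_combination h
  have habs : ‖(csqrt z - 1)‖ * ‖(csqrt z + 1)‖
      = ‖(z - 1)‖ := by rw [← norm_mul, key]
  have h1 : (1:ℝ) ≤ ‖(csqrt z + 1)‖ := by
    have := invsqrt_re_nonneg z
    have hre : (1:ℝ) ≤ (csqrt z + 1).re := by
      simp only [Complex.add_re, Complex.one_re]
      have := csqrt_re_nonneg z; linarith
    calc (1:ℝ) ≤ (csqrt z + 1).re := hre
      _ ≤ |(csqrt z + 1).re| := le_abs_self _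
      _ ≤ ‖(csqrt z + 1)‖ := Complex.abs_re_le_norm _
  calc ‖(csqrt z - 1)‖ ≤ ‖(csqrt z - 1)‖ * ‖(csqrt z + 1)‖ := by
        nlinarith [norm_nonneg (csqrt z - 1)]
    _ = ‖(z - 1)‖ := habs

section D
variable {z w : ℂ}

lemma absD_lb (hz : ‖(z - 1)‖ ≤ 1/2) : 1/2 ≤ ‖z‖ := by
  have h := norm_add_le (1 - z) z
  simp only [sub_add_cancel, norm_one] at h
  have : ‖(1 - z)‖ = ‖(z - 1)‖ := by
    rw [← norm_neg]; ring_nf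
  linarith

lemma absD_ub (hz : ‖(z - 1)‖ ≤ 1/2) : ‖z‖ ≤ 3/2 := by
  have h := norm_add_le (z - 1) 1
  simp only [sub_add_cancel, norm_one] at h
  linarith

lemma absD_ne (hz : ‖(z - 1)‖ ≤ 1/2) : z ≠ 0 := by
  intro h; rw [h] at hz; simp at hz; norm_num at hz

lemma abs_invsqrt_sq (hz : ‖(z - 1)‖ ≤ 1/2) :
    ‖(invsqrt z)‖ ^ 2 = (‖z‖)⁻¹ := by
  rw [← norm_pow, invsqrt_sq (absD_ne hz), norm_inv]

lemma abs_invsqrt_ub (hz : ‖(z - 1)‖ ≤ 1/2) : ‖(invsqrt z)‖ ≤ 3/2 := by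
  have h1 := abs_invsqrt_sq hz
  have h2 := absD_lb hz
  have h3 : (‖z‖)⁻¹ ≤ 2 := by
    rw [inv_le_comm₀ (by linarith) (by norm_num)]; linarith
  nlinarith [norm_nonneg (invsqrt z)]

lemma abs_invsqrt_lb (hz : ‖(z - 1)‖ ≤ 1/2) : 1/2 ≤ ‖(invsqrt z)‖ := by
  have h1 := abs_invsqrt_sq hz
  have h2 := absD_ub hz
  have h0 : (0:ℝ) < ‖z‖ := lt_of_lt_of_le (by norm_num) (absD_lb hz)
  have h3 : (2:ℝ)/3 ≤ (‖z‖)⁻¹ := by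
    rw [le_inv_comm₀ (by norm_num) h0]; linarith
  nlinarith [norm_nonneg (invsqrt z)]

lemma invsqrt_re_lb (hz : ‖(z - 1)‖ ≤ 1/2) : 1/4 ≤ (invsqrt z).re := by
  have hrez : 0 ≤ z.re := by
    have h := Complex.abs_re_le_norm (z - 1)
    have h2 : |(z-1).re| ≤ 1/2 := le_trans h hz
    simp only [Complex.sub_re, Complex.one_re] at h2
    have := abs_le.1 h2; linarith [this.1]
  have harg : |Complex.arg z| ≤ Real.pi / 2 := Complex.abs_arg_le_pi_div_two_iff.2 hrez
  have hre : (invsqrt z).re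
      = ‖(invsqrt z)‖ * Real.cos (-(1/2) * Complex.arg z) := by
    rw [invsqrt, Complex.exp_re, Complex.im_ofReal_mul, Complex.log_im, Complex.norm_exp,
      Complex.re_ofReal_mul, Complex.log_re]
  have hcos : 1/2 ≤ Real.cos (-(1/2) * Complex.arg z) := by
    have hb := Real.one_sub_sq_div_two_le_cos (x := -(1/2) * Complex.arg z)
    have hpi : Real.pi ≤ 4 := Real.pi_le_four
    have h4 : |(-(1/2) * Complex.arg z)| ≤ 1 := by
      rw [abs_mul]
      have : |(-(1/2):ℝ)| = 1/2 := by norm_num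
      rw [this]
      nlinarith [Real.pi_pos]
    nlinarith [abs_nonneg (-(1/2) * Complex.arg z), _root_.sq_abs (-(1/2) * Complex.arg z)]
  have hab := abs_invsqrt_lb hz
  calc (1:ℝ)/4 = (1/2) * (1/2) := by norm_num
    _ ≤ ‖(invsqrt z)‖ * Real.cos (-(1/2) * Complex.arg z) := by
        apply mul_le_mul hab hcos (by norm_num) (norm_nonneg _)
    _ = (invsqrt z).re := hre.symm

lemma invsqrt_sub_one (hz : ‖(z - 1)‖ ≤ 1/2) :
    ‖(invsqrt z - 1)‖ ≤ 2 * ‖(z - 1)‖ := by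
  have hz0 := absD_ne hz
  have key : (invsqrt z - 1) * (invsqrt z + 1) * z = 1 - z := by
    have h := invsqrt_sq hz0
    have : invsqrt z ^ 2 * z = 1 := by rw [h]; field_simp
    linear_combination this
  have habs : ‖(invsqrt z - 1)‖ * ‖(invsqrt z + 1)‖ * ‖z‖
      = ‖(z - 1)‖ := by
    rw [← norm_mul, ← norm_mul, key, ← norm_neg]; ring_nf
  have h1 : (1:ℝ) ≤ ‖(invsqrt z + 1)‖ := by
    have hre : (1:ℝ) ≤ (invsqrt z + 1).re := by
      simp only [Complex.add_re, Complex.one_re]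
      have := invsqrt_re_nonneg z; linarith
    calc (1:ℝ) ≤ (invsqrt z + 1).re := hre
      _ ≤ |(invsqrt z + 1).re| := le_abs_self _
      _ ≤ ‖(invsqrt z + 1)‖ := Complex.abs_re_le_norm _
  have h2 := absD_lb hz
  set A := ‖(invsqrt z - 1)‖
  set B := ‖(invsqrt z + 1)‖
  have hA : 0 ≤ A := norm_nonneg _
  have hBz : 1/2 ≤ B * ‖z‖ := by nlinarith [norm_nonneg z]
  have h4 : A * (1/2) ≤ A * (B * ‖z‖) := mul_le_mul_of_nonneg_left hBz hA
  have h5 : A * (B * ‖z‖) = A * B * ‖z‖ := by ring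
  linarith

lemma invsqrt_lipschitz (hz : ‖(z - 1)‖ ≤ 1/2) (hw : ‖(w - 1)‖ ≤ 1/2) :
    ‖(invsqrt z - invsqrt w)‖ ≤ 8 * ‖(z - w)‖ := by
  have hz0 := absD_ne hz; have hw0 := absD_ne hw
  have key : (invsqrt z - invsqrt w) * (invsqrt z + invsqrt w) * (z * w) = w - z := by
    have h1 : invsqrt z ^ 2 * z = 1 := by rw [invsqrt_sq hz0]; field_simp
    have h2 : invsqrt w ^ 2 * w = 1 := by rw [invsqrt_sq hw0]; field_simp
    linear_combination w * h1 - z * h2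
  have habs : ‖(invsqrt z - invsqrt w)‖ * ‖(invsqrt z + invsqrt w)‖
      * (‖z‖ * ‖w‖) = ‖(z - w)‖ := by
    rw [← norm_mul, ← norm_mul, ← norm_mul, key, ← norm_neg]; ring_nf
  have h1 : (1:ℝ)/2 ≤ ‖(invsqrt z + invsqrt w)‖ := by
    have hre : (1:ℝ)/2 ≤ (invsqrt z + invsqrt w).re := by
      simp only [Complex.add_re]
      have := invsqrt_re_lb hz; have := invsqrt_re_lb hw; linarith
    calc (1:ℝ)/2 ≤ (invsqrt z + invsqrt w).re := hre
      _ ≤ |(invsqrt z + invsqrt w).re| := le_abs_self _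
      _ ≤ ‖(invsqrt z + invsqrt w)‖ := Complex.abs_re_le_norm _
  have h2 := absD_lb hz; have h3 := absD_lb hw
  set A := ‖(invsqrt z - invsqrt w)‖
  set B := ‖(invsqrt z + invsqrt w)‖
  have hA : 0 ≤ A := norm_nonneg _
  have hzw : 1/4 ≤ ‖z‖ * ‖w‖ := by
    nlinarith [norm_nonneg z, norm_nonneg w]
  have hBz : 1/8 ≤ B * (‖z‖ * ‖w‖) := by
    calc (1:ℝ)/8 = (1/2) * (1/4) := by norm_num
      _ ≤ B * (‖z‖ * ‖w‖) :=
        mul_le_mul h1 hzw (by norm_num) (le_trans (by norm_num) h1)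
  have h4 : A * (1/8) ≤ A * (B * (‖z‖ * ‖w‖)) :=
    mul_le_mul_of_nonneg_left hBz hA
  have h5 : A * (B * (‖z‖ * ‖w‖))
      = A * B * (‖z‖ * ‖w‖) := by ring
  linarith

lemma invsqrt_continuousAt (hz : ‖(z - 1)‖ ≤ 1/2) : ContinuousAt invsqrt z := by
  have hrez : 0 < z.re := by
    have h := Complex.abs_re_le_norm (z - 1)
    have h2 : |(z-1).re| ≤ 1/2 := le_trans h hz
    simp only [Complex.sub_re, Complex.one_re] at h2
    have := abs_le.1 h2; linarith [this.1]
  have hlog : ContinuousAt Complex.log z :=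
    continuousAt_clog (Complex.mem_slitPlane_iff.2 (Or.inl hrez))
  exact Complex.continuous_exp.continuousAt.comp (continuousAt_const.mul hlog)

end D
noncomputable def sfun (α δ : ℝ) : ℝ := Real.sqrt (1 - 12*δ^2*α)
noncomputable def Mc (α : ℝ) : ℝ := Real.sqrt (2*α)
noncomputable def K0 (α : ℝ) : ℝ := 20*α + 4*Mc α + 8
noncomputable def Pfun (α δ : ℝ) : ℝ := δ^2 * etaStar α δ
noncomputable def Rfun (α δ : ℝ) (ν : ℂ) : ℂ :=
  ((sfun α δ : ℝ):ℂ) + 4*((Pfun α δ : ℝ):ℂ)*ν - (δ:ℂ)^2 * ν^2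
noncomputable def gfun (α δ : ℝ) (γ ν : ℂ) : ℂ := γ * invsqrt (Rfun α δ ν)
noncomputable def seqf (α : ℝ) : ℕ → ℝ → ℂ → ℂ
  | 0, _, _ => 0
  | (n+1), δ, γ => gfun α δ γ (seqf α n δ γ)
noncomputable def nufun (α δ : ℝ) (γ : ℂ) : ℂ := Filter.limUnder Filter.atTop (fun n => seqf α n δ γ)

section Facts
variable {α δ : ℝ}

lemma hM_sq (hα : 0 < α) : (Mc α)^2 = 2*α := Real.sq_sqrt (by linarith)
lemma hM0 : 0 ≤ Mc α := Real.sqrt_nonneg _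
lemma hK0_ge (hα : 0 < α) : 8 ≤ K0 α := by
  have := hM0 (α := α); simp only [K0]; linarith
lemma hK0_pos (hα : 0 < α) : 0 < K0 α := lt_of_lt_of_le (by norm_num) (hK0_ge hα)

lemma h12 (hα : 0 < α) (hδK : δ^2 * K0 α ≤ 1/4) : 12*δ^2*α ≤ 1/4 := by
  have h1 : 12*α ≤ K0 α := by have := hM0 (α := α); simp only [K0]; linarith
  have h2 : δ^2 * (12*α) ≤ δ^2 * K0 α := mul_le_mul_of_nonneg_left h1 (sq_nonneg δ)
  linarith

lemma hs_nonneg : 0 ≤ sfun α δ := Real.sqrt_nonneg _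
lemma hs_sq (hα : 0 < α) (hδK : δ^2 * K0 α ≤ 1/4) : (sfun α δ)^2 = 1 - 12*δ^2*α :=
  Real.sq_sqrt (by have := h12 hα hδK; linarith)
lemma hs_le1 (hα : 0 < α) : sfun α δ ≤ 1 := by
  have h0 : 0 ≤ δ^2*α := mul_nonneg (sq_nonneg _) (le_of_lt hα)
  exact Real.sqrt_le_one.mpr (by linarith)
lemma hs_gap (hα : 0 < α) (hδK : δ^2 * K0 α ≤ 1/4) : 1 - sfun α δ ≤ 12*δ^2*α := by
  have h1 := hs_sq hα hδK
  have h2 := hs_le1 (δ := δ) hα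
  have h3 := hs_nonneg (α := α) (δ := δ)
  nlinarith [mul_nonneg h3 (by linarith : 0 ≤ 1 - sfun α δ)]
lemma hs_lb (hα : 0 < α) (hδK : δ^2 * K0 α ≤ 1/4) : 3/4 ≤ sfun α δ := by
  have := hs_gap hα hδK; have := h12 hα hδK; linarith

lemma heta0 : 0 ≤ etaStar α δ := by
  unfold etaStar; split <;> positivity

lemma heta_sq (hα : 0 < α) (hδK : δ^2 * K0 α ≤ 1/4) (hδ0 : δ ≠ 0) :
    6*δ^2*(etaStar α δ)^2 = 1 - sfun α δ := by
  have h1s : 0 ≤ 1 - sfun α δ := by have := hs_le1 (δ := δ) hα; linarith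
  simp only [sfun] at h1s ⊢
  rw [etaStar, if_neg hδ0, mul_pow, Real.sq_sqrt h1s, div_pow, mul_pow,
    Real.sq_sqrt (by norm_num : (0:ℝ) ≤ 6), sq_abs, one_pow]
  have hδ2 : δ^2 ≠ 0 := pow_ne_zero _ hδ0
  field_simp

lemma heta_ub (hα : 0 < α) (hδK : δ^2 * K0 α ≤ 1/4) : etaStar α δ ≤ Mc α := by
  rcases eq_or_ne δ 0 with h | h
  · rw [etaStar, if_pos h, Mc]
    exact Real.sqrt_le_sqrt (by linarith)
  · have h1 := heta_sq hα hδK h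
    have h2 := hs_gap hα hδK
    have hδ2 : 0 < δ^2 := by positivity
    have h3 : (etaStar α δ)^2 ≤ 2*α := by nlinarith
    exact Real.le_sqrt_of_sq_le h3

lemma hP_nonneg : 0 ≤ Pfun α δ := mul_nonneg (sq_nonneg _) heta0
lemma hP_ub (hα : 0 < α) (hδK : δ^2 * K0 α ≤ 1/4) : Pfun α δ ≤ δ^2 * Mc α :=
  mul_le_mul_of_nonneg_left (heta_ub hα hδK) (sq_nonneg δ)

lemma hP_eq : Pfun α δ = |δ| / Real.sqrt 6 * Real.sqrt (1 - sfun α δ) := by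
  rcases eq_or_ne δ 0 with h | h
  · subst h
    simp [Pfun, sfun]
  · rw [Pfun, etaStar, if_neg h]
    have h6 : Real.sqrt 6 ≠ 0 := by positivity
    have hδa : |δ| ≠ 0 := by simpa using h
    have hd : δ^2 = |δ|^2 := (sq_abs δ).symm
    simp only [sfun]
    field_simp
    rw [hd]

lemma hcont_P : Continuous (Pfun α) := by
  have h : (Pfun α) = fun δ => |δ| / Real.sqrt 6 * Real.sqrt (1 - sfun α δ) :=
    funext fun δ => hP_eq
  rw [h]
  apply Continuous.mul
  · exact (continuous_abs).div_const _
  · apply Real.continuous_sqrt.comp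
    apply Continuous.sub continuous_const
    apply Real.continuous_sqrt.comp
    continuity

lemma hcont_s : Continuous (sfun α) := by
  apply Real.continuous_sqrt.comp; continuity

end Facts
section Iter
variable {α δ : ℝ} {γ : ℂ}

lemma habs_d2 (δ : ℝ) (x : ℂ) : ‖((δ:ℂ)^2 * x)‖ = δ^2 * ‖x‖ := by
  rw [norm_mul, norm_pow, Complex.norm_real, Real.norm_eq_abs, sq_abs]

lemma abs3 (a b c : ℂ) :
    ‖(a + b - c)‖ ≤ ‖a‖ + ‖b‖ + ‖c‖ := by
  have h := norm_add_le (a + b) (-c)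
  rw [← sub_eq_add_neg, norm_neg] at h
  have h2 := norm_add_le a b
  linarith

lemma hR_close (hα : 0 < α) (hδK : δ^2 * K0 α ≤ 1/4) {ν : ℂ} (hν : ‖ν‖ ≤ 1) :
    ‖(Rfun α δ ν - 1)‖ ≤ δ^2 * K0 α := by
  have hs1 := hs_le1 (δ := δ) hα
  have hsg := hs_gap hα hδK
  have hP1 := hP_nonneg (α := α) (δ := δ)
  have hP2 := hP_ub hα hδK
  have hMn := hM0 (α := α)
  have hν0 := norm_nonneg ν
  have h1 : Rfun α δ ν - 1
      = ((sfun α δ - 1 : ℝ):ℂ) + 4*((Pfun α δ : ℝ):ℂ)*ν - (δ:ℂ)^2*ν^2 := by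
    simp only [Rfun]; push_cast; ring
  rw [h1]
  have t1 : ‖((sfun α δ - 1 : ℝ):ℂ)‖ = 1 - sfun α δ := by
    rw [Complex.norm_real, Real.norm_eq_abs, abs_of_nonpos (by linarith)]; ring
  have t2 : ‖(4*((Pfun α δ : ℝ):ℂ)*ν)‖ ≤ 4 * (δ^2 * Mc α) := by
    rw [norm_mul, norm_mul, Complex.norm_real, Real.norm_eq_abs]
    rw [Complex.norm_ofNat, abs_of_nonneg hP1]
    nlinarith
  have t3 : ‖((δ:ℂ)^2*ν^2)‖ ≤ δ^2 := by
    rw [habs_d2, norm_pow]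
    have h9 : ‖ν‖ ^ 2 ≤ 1 := by nlinarith
    nlinarith [sq_nonneg δ]
  have := abs3 ((sfun α δ - 1 : ℝ):ℂ) (4*((Pfun α δ : ℝ):ℂ)*ν) ((δ:ℂ)^2*ν^2)
  have hK : 12*α + 4*Mc α + 1 ≤ K0 α := by simp only [K0]; linarith
  have h2 : δ^2*(12*α + 4*Mc α + 1) ≤ δ^2 * K0 α :=
    mul_le_mul_of_nonneg_left hK (sq_nonneg δ)
  rw [t1] at this
  nlinarith

lemma hR_lip (hα : 0 < α) (hδK : δ^2 * K0 α ≤ 1/4) {ν ν' : ℂ}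
    (hν : ‖ν‖ ≤ 1) (hν' : ‖ν'‖ ≤ 1) :
    ‖(Rfun α δ ν - Rfun α δ ν')‖ ≤ δ^2 * K0 α * ‖(ν - ν')‖ := by
  have hP1 := hP_nonneg (α := α) (δ := δ)
  have hP2 := hP_ub hα hδK
  have hMn := hM0 (α := α)
  have h1 : Rfun α δ ν - Rfun α δ ν'
      = (ν - ν') * (4*((Pfun α δ : ℝ):ℂ) - (δ:ℂ)^2*(ν+ν')) := by
    simp only [Rfun]; ring
  rw [h1, norm_mul]
  have t1 : ‖(4*((Pfun α δ : ℝ):ℂ) - (δ:ℂ)^2*(ν+ν'))‖ ≤ δ^2 * K0 α := by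
    have h2 : ‖(4*((Pfun α δ : ℝ):ℂ) - (δ:ℂ)^2*(ν+ν'))‖
        ≤ ‖(4*((Pfun α δ : ℝ):ℂ))‖ + ‖((δ:ℂ)^2*(ν+ν'))‖ := by
      have := abs3 (4*((Pfun α δ : ℝ):ℂ)) 0 ((δ:ℂ)^2*(ν+ν')); simpa using this
    have t2 : ‖(4*((Pfun α δ : ℝ):ℂ))‖ = 4 * Pfun α δ := by
      rw [norm_mul, Complex.norm_real, Real.norm_eq_abs]
      rw [Complex.norm_ofNat, abs_of_nonneg hP1]
    have t3 : ‖((δ:ℂ)^2*(ν+ν'))‖ ≤ 2*δ^2 := by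
      rw [habs_d2]
      have := norm_add_le ν ν'
      nlinarith [sq_nonneg δ]
    have hK : 4*Mc α + 2 ≤ K0 α := by simp only [K0]; nlinarith [hα]
    have h3 : δ^2*(4*Mc α + 2) ≤ δ^2 * K0 α := mul_le_mul_of_nonneg_left hK (sq_nonneg δ)
    rw [t2] at h2
    nlinarith
  calc ‖(ν-ν')‖ * ‖(4*((Pfun α δ : ℝ):ℂ) - (δ:ℂ)^2*(ν+ν'))‖
      ≤ ‖(ν-ν')‖ * (δ^2 * K0 α) :=
        mul_le_mul_of_nonneg_left t1 (norm_nonneg _)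
    _ = δ^2 * K0 α * ‖(ν - ν')‖ := by ring

lemma hRD (hα : 0 < α) (hδK : δ^2 * K0 α ≤ 1/4) {ν : ℂ} (hν : ‖ν‖ ≤ 1) :
    ‖(Rfun α δ ν - 1)‖ ≤ 1/2 :=
  le_trans (hR_close hα hδK hν) (by linarith)

lemma hg_maps (hα : 0 < α) (hδK : δ^2 * K0 α ≤ 1/4) {ν : ℂ} (hν : ‖ν‖ ≤ 1) :
    ‖(gfun α δ γ ν)‖ ≤ 3/2 * ‖γ‖ := by
  rw [gfun, norm_mul]
  have := abs_invsqrt_ub (hRD hα hδK hν)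
  nlinarith [norm_nonneg γ, norm_nonneg (invsqrt (Rfun α δ ν))]

lemma hg_lip (hα : 0 < α) (hδK : δ^2 * K0 α ≤ 1/4) (hγ : ‖γ‖ ≤ 1/8)
    {ν ν' : ℂ} (hν : ‖ν‖ ≤ 1) (hν' : ‖ν'‖ ≤ 1) :
    ‖(gfun α δ γ ν - gfun α δ γ ν')‖ ≤ (1/4) * ‖(ν - ν')‖ := by
  have h1 : gfun α δ γ ν - gfun α δ γ ν'
      = γ * (invsqrt (Rfun α δ ν) - invsqrt (Rfun α δ ν')) := by rw [gfun, gfun]; ring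
  rw [h1, norm_mul]
  have h2 := invsqrt_lipschitz (hRD hα hδK hν) (hRD hα hδK hν')
  have h3 := hR_lip hα hδK hν hν'
  have h4 : ‖(invsqrt (Rfun α δ ν) - invsqrt (Rfun α δ ν'))‖
      ≤ 8 * (δ^2 * K0 α * ‖(ν - ν')‖) := by
    refine le_trans h2 ?_
    nlinarith
  have hγ0 := norm_nonneg γ
  have habs0 := norm_nonneg (ν - ν')
  have h5 : δ^2 * K0 α * ‖(ν - ν')‖ ≤ (1/4) * ‖(ν - ν')‖ :=
    mul_le_mul_of_nonneg_right hδK habs0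
  calc ‖γ‖ * ‖(invsqrt (Rfun α δ ν) - invsqrt (Rfun α δ ν'))‖
      ≤ (1/8) * (8 * (δ^2 * K0 α * ‖(ν - ν')‖)) := by
        apply mul_le_mul hγ h4 (norm_nonneg _) (by norm_num)
    _ = δ^2 * K0 α * ‖(ν - ν')‖ := by ring
    _ ≤ (1/4) * ‖(ν - ν')‖ := h5

lemma hseq_mem (hα : 0 < α) (hδK : δ^2 * K0 α ≤ 1/4) (hγ : ‖γ‖ ≤ 1/8) :
    ∀ n, ‖(seqf α n δ γ)‖ ≤ 1/4 := by
  intro n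
  induction n with
  | zero => simp [seqf]
  | succ n ih =>
    have := hg_maps (γ := γ) hα hδK (le_trans ih (by norm_num))
    simp only [seqf]
    nlinarith [norm_nonneg γ]

lemma hseq_diff (hα : 0 < α) (hδK : δ^2 * K0 α ≤ 1/4) (hγ : ‖γ‖ ≤ 1/8) :
    ∀ n, dist (seqf α n δ γ) (seqf α (n+1) δ γ) ≤ (1/4) * (1/4)^n := by
  intro n
  induction n with
  | zero =>
    simp only [seqf, Complex.dist_eq, zero_sub, norm_neg, pow_zero, mul_one]
    have := hg_maps (γ := γ) (ν := 0) hα hδK (by simp)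
    nlinarith [norm_nonneg γ]
  | succ n ih =>
    have h1 : seqf α (n+1) δ γ = gfun α δ γ (seqf α n δ γ) := rfl
    have h2 : seqf α (n+2) δ γ = gfun α δ γ (seqf α (n+1) δ γ) := rfl
    have hb1 := hseq_mem hα hδK hγ n
    have hb2 := hseq_mem hα hδK hγ (n+1)
    have h3 := hg_lip hα hδK hγ (le_trans hb1 (by norm_num)) (le_trans hb2 (by norm_num))
    rw [Complex.dist_eq] at ih ⊢
    rw [h1, h2]
    calc ‖(gfun α δ γ (seqf α n δ γ) - gfun α δ γ (seqf α (n+1) δ γ))‖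
        ≤ (1/4) * ‖(seqf α n δ γ - seqf α (n+1) δ γ)‖ := h3
      _ ≤ (1/4) * ((1/4) * (1/4)^n) := by nlinarith [norm_nonneg (seqf α n δ γ - seqf α (n+1) δ γ)]
      _ = (1/4) * (1/4)^(n+1) := by ring

lemma htend (hα : 0 < α) (hδK : δ^2 * K0 α ≤ 1/4) (hγ : ‖γ‖ ≤ 1/8) :
    Filter.Tendsto (fun n => seqf α n δ γ) Filter.atTop (nhds (nufun α δ γ)) := by
  have hc : CauchySeq (fun n => seqf α n δ γ) :=
    cauchySeq_of_le_geometric (1/4) (1/4) (by norm_num) (hseq_diff hα hδK hγ)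
  exact hc.tendsto_limUnder

lemma hnu_mem (hα : 0 < α) (hδK : δ^2 * K0 α ≤ 1/4) (hγ : ‖γ‖ ≤ 1/8) :
    ‖(nufun α δ γ)‖ ≤ 1/4 := by
  have h1 : Filter.Tendsto (fun n => ‖(seqf α n δ γ)‖) Filter.atTop
      (nhds (‖(nufun α δ γ)‖)) :=
    (continuous_norm.continuousAt.tendsto).comp (htend hα hδK hγ)
  exact le_of_tendsto h1 (Filter.Eventually.of_forall (hseq_mem hα hδK hγ))

lemma hnu_rate (hα : 0 < α) (hδK : δ^2 * K0 α ≤ 1/4) (hγ : ‖γ‖ ≤ 1/8) (n : ℕ) :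
    dist (seqf α n δ γ) (nufun α δ γ) ≤ (1/3) * (1/4)^n := by
  have := dist_le_of_le_geometric_of_tendsto (1/4) (1/4) (by norm_num)
    (hseq_diff hα hδK hγ) (htend hα hδK hγ) n
  calc dist (seqf α n δ γ) (nufun α δ γ) ≤ (1/4) * (1/4)^n / (1 - 1/4) := this
    _ = (1/3) * (1/4)^n := by ring

lemma hnu_fix (hα : 0 < α) (hδK : δ^2 * K0 α ≤ 1/4) (hγ : ‖γ‖ ≤ 1/8) :
    gfun α δ γ (nufun α δ γ) = nufun α δ γ := by
  set nu := nufun α δ γ with hnu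
  have hnub : ‖nu‖ ≤ 1 := le_trans (hnu_mem hα hδK hγ) (by norm_num)
  have hb : ∀ n, dist nu (gfun α δ γ nu)
      ≤ dist nu (seqf α (n+1) δ γ) + (1/4) * dist (seqf α n δ γ) nu := by
    intro n
    have h1 : dist nu (gfun α δ γ nu)
        ≤ dist nu (seqf α (n+1) δ γ) + dist (seqf α (n+1) δ γ) (gfun α δ γ nu) :=
      dist_triangle _ _ _
    have h2 : dist (seqf α (n+1) δ γ) (gfun α δ γ nu)
        ≤ (1/4) * dist (seqf α n δ γ) nu := by
      have h3 : seqf α (n+1) δ γ = gfun α δ γ (seqf α n δ γ) := rfl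
      rw [h3, Complex.dist_eq, Complex.dist_eq]
      exact hg_lip hα hδK hγ (le_trans (hseq_mem hα hδK hγ n) (by norm_num)) hnub
    linarith
  have h0 : Filter.Tendsto
      (fun n => dist nu (seqf α (n+1) δ γ) + (1/4) * dist (seqf α n δ γ) nu)
      Filter.atTop (nhds 0) := by
    have ha : Filter.Tendsto (fun n => dist (seqf α n δ γ) nu) Filter.atTop (nhds 0) :=
      tendsto_iff_dist_tendsto_zero.1 (htend hα hδK hγ)
    have hb' : Filter.Tendsto (fun n => dist nu (seqf α (n+1) δ γ)) Filter.atTop (nhds 0) := by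
      have := ha.comp (Filter.tendsto_add_atTop_nat 1)
      simpa [dist_comm, Function.comp_def] using this
    have hc' : Filter.Tendsto (fun n => (1/4 : ℝ) * dist (seqf α n δ γ) nu)
        Filter.atTop (nhds 0) := by
      have := ha.const_mul (1/4 : ℝ)
      simpa using this
    simpa using hb'.add hc'
  have hd : dist nu (gfun α δ γ nu) ≤ 0 :=
    ge_of_tendsto h0 (Filter.Eventually.of_forall hb)
  have : dist nu (gfun α δ γ nu) = 0 := le_antisymm hd dist_nonneg
  exact (eq_of_dist_eq_zero this).symm

lemma hnu_close (hα : 0 < α) (hδK : δ^2 * K0 α ≤ 1/4) (hγ : ‖γ‖ ≤ 1/8) :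
    ‖(nufun α δ γ - γ)‖ ≤ 2 * (δ^2 * K0 α) * ‖γ‖ := by
  have hfix := hnu_fix hα hδK hγ
  have hnub : ‖(nufun α δ γ)‖ ≤ 1 := le_trans (hnu_mem hα hδK hγ) (by norm_num)
  have h1 : nufun α δ γ - γ = γ * (invsqrt (Rfun α δ (nufun α δ γ)) - 1) := by
    conv_lhs => rw [← hfix]
    rw [gfun]; ring
  rw [h1, norm_mul]
  have h2 := invsqrt_sub_one (hRD hα hδK hnub)
  have h3 := hR_close hα hδK hnub
  have hγ0 := norm_nonneg γ
  calc ‖γ‖ * ‖(invsqrt (Rfun α δ (nufun α δ γ)) - 1)‖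
      ≤ ‖γ‖ * (2 * (δ^2 * K0 α)) := by
        apply mul_le_mul_of_nonneg_left _ hγ0
        calc ‖(invsqrt (Rfun α δ (nufun α δ γ)) - 1)‖
            ≤ 2 * ‖(Rfun α δ (nufun α δ γ) - 1)‖ := h2
          _ ≤ 2 * (δ^2 * K0 α) := by linarith
    _ = 2 * (δ^2 * K0 α) * ‖γ‖ := by ring

lemma hnu_root (hα : 0 < α) (hδK : δ^2 * K0 α ≤ 1/4) (hγ : ‖γ‖ ≤ 1/8) :
    (nufun α δ γ)^2 * Rfun α δ (nufun α δ γ) = γ^2 := by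
  have hfix := hnu_fix hα hδK hγ
  have hnub : ‖(nufun α δ γ)‖ ≤ 1 := le_trans (hnu_mem hα hδK hγ) (by norm_num)
  have hR0 : Rfun α δ (nufun α δ γ) ≠ 0 := absD_ne (hRD hα hδK hnub)
  have h1 : (nufun α δ γ)^2 = γ^2 * (invsqrt (Rfun α δ (nufun α δ γ)))^2 := by
    conv_lhs => rw [← hfix]
    rw [gfun]; ring
  rw [h1, invsqrt_sq hR0]
  field_simp

lemma hnu_zero : nufun α δ 0 = 0 := by
  have hs : ∀ n, seqf α n δ 0 = 0 := by
    intro n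
    induction n with
    | zero => rfl
    | succ n ih => simp only [seqf, gfun, ih, zero_mul]
  rw [nufun]
  have : (fun n => seqf α n δ 0) = fun _ => (0:ℂ) := funext hs
  rw [this]
  exact Filter.Tendsto.limUnder_eq tendsto_const_nhds

end Iter

section Cont
variable {α : ℝ}

def Tset (α : ℝ) : Set (ℝ × ℂ) := {p | p.1^2 * K0 α ≤ 1/4 ∧ ‖p.2‖ ≤ 1/8}

lemma hcont_seq (hα : 0 < α) (n : ℕ) :
    ContinuousOn (fun p : ℝ × ℂ => seqf α n p.1 p.2) (Tset α) := by
  induction n with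
  | zero => simpa [seqf] using (continuousOn_const :
      ContinuousOn (fun _ : ℝ × ℂ => (0:ℂ)) (Tset α))
  | succ n ih =>
    have hW : ContinuousOn (fun p : ℝ × ℂ => Rfun α p.1 (seqf α n p.1 p.2)) (Tset α) := by
      simp only [Rfun]
      apply ContinuousOn.sub
      · apply ContinuousOn.add
        · exact (Complex.continuous_ofReal.comp
            ((hcont_s (α := α)).comp continuous_fst)).continuousOn
        · exact (continuousOn_const.mul (Complex.continuous_ofReal.comp
            ((hcont_P (α := α)).comp continuous_fst)).continuousOn).mul ih
      · exact (((Complex.continuous_ofReal.comp continuous_fst).continuousOn).pow 2).mul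
          (ih.pow 2)
    have hI : ContinuousOn
        (fun p : ℝ × ℂ => invsqrt (Rfun α p.1 (seqf α n p.1 p.2))) (Tset α) := by
      intro p hp
      have hb : ‖(seqf α n p.1 p.2)‖ ≤ 1 :=
        le_trans (hseq_mem hα hp.1 hp.2 n) (by norm_num)
      show ContinuousWithinAt
        (invsqrt ∘ (fun q : ℝ × ℂ => Rfun α q.1 (seqf α n q.1 q.2))) (Tset α) p
      exact ContinuousAt.comp_continuousWithinAt
        (invsqrt_continuousAt (hRD hα hp.1 hb)) (hW p hp)
    have : (fun p : ℝ × ℂ => seqf α (n+1) p.1 p.2)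
        = fun p : ℝ × ℂ => p.2 * invsqrt (Rfun α p.1 (seqf α n p.1 p.2)) := by
      funext p; rfl
    rw [this]
    exact continuous_snd.continuousOn.mul hI

lemma hcont_nu (hα : 0 < α) :
    ContinuousOn (fun p : ℝ × ℂ => nufun α p.1 p.2) (Tset α) := by
  have htu : TendstoUniformlyOn (fun (n : ℕ) (p : ℝ × ℂ) => seqf α n p.1 p.2)
      (fun p => nufun α p.1 p.2) Filter.atTop (Tset α) := by
    rw [Metric.tendstoUniformlyOn_iff]
    intro ε hε
    have hgeo : Filter.Tendsto (fun n : ℕ => (1/3 : ℝ) * (1/4)^n) Filter.atTop (nhds 0) := by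
      have := tendsto_pow_atTop_nhds_zero_of_lt_one (by norm_num : (0:ℝ) ≤ 1/4)
        (by norm_num : (1/4:ℝ) < 1)
      simpa using this.const_mul (1/3 : ℝ)
    filter_upwards [hgeo.eventually (gt_mem_nhds hε)] with n hn p hp
    have hr := hnu_rate hα hp.1 hp.2 n
    calc dist (nufun α p.1 p.2) (seqf α n p.1 p.2)
        = dist (seqf α n p.1 p.2) (nufun α p.1 p.2) := dist_comm _ _
      _ ≤ (1/3) * (1/4)^n := hr
      _ < ε := hn
  exact htu.continuousOn (Filter.Eventually.of_forall (hcont_seq hα)).frequently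

end Cont

set_option maxHeartbeats 1000000 in
theorem stmt11 (α : ℝ) (hα : 0 < α) :
    ∃ δ₀ : ℝ, 0 < δ₀ ∧ δ₀ < 1 / Real.sqrt (12 * α) ∧
    ∃ γ₀ > (0 : ℝ), ∃ C > (0 : ℝ), ∃ ν₂ ν₃ : ℝ → ℂ → ℂ,
      ContinuousOn (fun p : ℝ × ℂ => ν₂ p.1 p.2)
        (Set.Ioo (-δ₀) δ₀ ×ˢ Metric.ball (0 : ℂ) γ₀)
      ∧ ContinuousOn (fun p : ℝ × ℂ => ν₃ p.1 p.2)
          (Set.Ioo (-δ₀) δ₀ ×ˢ Metric.ball (0 : ℂ) γ₀)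
      ∧ ∀ δ : ℝ, 0 < |δ| → |δ| < δ₀ → ∀ γ : ℂ, ‖γ‖ < γ₀ →
          ∃ ν₁ ν₄ : ℂ,
            (∀ ν : ℂ, disp α δ (cStar α δ) (γ ^ 2) (-(etaStar α δ : ℂ) + ν)
                = -(δ : ℂ) ^ 2 * (ν - ν₁) * (ν - ν₂ δ γ) * (ν - ν₃ δ γ) * (ν - ν₄))
            ∧ ‖ν₁ + (1 / |δ| : ℝ)‖ ≤ C
            ∧ ‖ν₄ - (1 / |δ| : ℝ)‖ ≤ C
            ∧ ‖ν₂ δ γ + γ‖ ≤ C * (|δ| * ‖γ‖ + ‖γ‖ ^ 2)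
            ∧ ‖ν₃ δ γ - γ‖ ≤ C * (|δ| * ‖γ‖ + ‖γ‖ ^ 2) := by
  have hMn := hM0 (α := α)
  have hMsq := hM_sq hα
  have hK8 := hK0_ge hα
  have hKpos := hK0_pos hα
  have h12s : (0:ℝ) < Real.sqrt (12*α) := Real.sqrt_pos.2 (by linarith)
  have hKs : (0:ℝ) < Real.sqrt (K0 α) := Real.sqrt_pos.2 hKpos
  set δ₀ : ℝ := min (1/(2*Real.sqrt (12*α))) (1/(2*Real.sqrt (K0 α))) with hδ₀def
  have hδ₀pos : 0 < δ₀ := lt_min (by positivity) (by positivity)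
  have hδ₀lt : δ₀ < 1/Real.sqrt (12*α) := by
    apply lt_of_le_of_lt (min_le_left _ _)
    rw [div_lt_div_iff₀ (by positivity) h12s]
    nlinarith
  have hδ₀K : ∀ δ : ℝ, |δ| < δ₀ → δ^2 * K0 α ≤ 1/4 := by
    intro δ h
    have h1 : |δ| ≤ 1/(2*Real.sqrt (K0 α)) := le_of_lt (lt_of_lt_of_le h (min_le_right _ _))
    have h2 : δ^2 ≤ (1/(2*Real.sqrt (K0 α)))^2 := by
      rw [← sq_abs]; exact pow_le_pow_left₀ (abs_nonneg δ) h1 2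
    have h3 : (1/(2*Real.sqrt (K0 α)))^2 = 1/(4*K0 α) := by
      rw [div_pow, one_pow, mul_pow, Real.sq_sqrt (le_of_lt hKpos)]; norm_num
    rw [h3] at h2
    calc δ^2 * K0 α ≤ (1/(4*K0 α)) * K0 α := mul_le_mul_of_nonneg_right h2 (le_of_lt hKpos)
      _ = 1/4 := by
        rw [div_mul_eq_mul_div, one_mul, div_eq_div_iff (by positivity) (by norm_num)]
        ring
  have hδ₀le1 : δ₀ ≤ 1 := by
    have hs2 : (2:ℝ) ≤ Real.sqrt (K0 α) :=
      (Real.le_sqrt (by norm_num) (le_of_lt hKpos)).2 (by linarith)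
    have : (1:ℝ)/(2*Real.sqrt (K0 α)) ≤ 1/4 :=
      one_div_le_one_div_of_le (by norm_num) (by linarith)
    have := min_le_right (1/(2*Real.sqrt (12*α))) (1/(2*Real.sqrt (K0 α)))
    rw [← hδ₀def] at this
    linarith
  set C : ℝ := 2*K0 α + 2*Mc α + 2 with hCdef
  have hCpos : 0 < C := by rw [hCdef]; linarith
  refine ⟨δ₀, hδ₀pos, hδ₀lt, 1/8, by norm_num, C, hCpos,
    (fun δ γ => nufun α δ (-γ)), (fun δ γ => nufun α δ γ), ?_, ?_, ?_⟩
  · -- continuity of ν₂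
    have hsub : (Set.Ioo (-δ₀) δ₀ ×ˢ Metric.ball (0 : ℂ) (1/8)) ⊆ Tset α := by
      intro p hp
      obtain ⟨hp1, hp2⟩ := hp
      refine ⟨hδ₀K p.1 (abs_lt.2 ⟨hp1.1, hp1.2⟩), ?_⟩
      have := Metric.mem_ball.1 hp2
      rw [Complex.dist_eq, sub_zero] at this
      exact le_of_lt this
    have hφ : Continuous (fun p : ℝ × ℂ => (p.1, -p.2)) :=
      continuous_fst.prodMk continuous_snd.neg
    have hmap : Set.MapsTo (fun p : ℝ × ℂ => (p.1, -p.2))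
        (Set.Ioo (-δ₀) δ₀ ×ˢ Metric.ball (0 : ℂ) (1/8)) (Tset α) := by
      intro p hp
      obtain ⟨hp1, hp2⟩ := hp
      refine ⟨hδ₀K p.1 (abs_lt.2 ⟨hp1.1, hp1.2⟩), ?_⟩
      have := Metric.mem_ball.1 hp2
      rw [Complex.dist_eq, sub_zero] at this
      simpa using le_of_lt this
    show ContinuousOn ((fun p : ℝ × ℂ => nufun α p.1 p.2)
      ∘ (fun p : ℝ × ℂ => (p.1, -p.2))) (Set.Ioo (-δ₀) δ₀ ×ˢ Metric.ball (0 : ℂ) (1/8))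
    exact ContinuousOn.comp (hcont_nu hα) hφ.continuousOn hmap
  · -- continuity of ν₃
    have hsub : (Set.Ioo (-δ₀) δ₀ ×ˢ Metric.ball (0 : ℂ) (1/8)) ⊆ Tset α := by
      intro p hp
      obtain ⟨hp1, hp2⟩ := hp
      refine ⟨hδ₀K p.1 (abs_lt.2 ⟨hp1.1, hp1.2⟩), ?_⟩
      have := Metric.mem_ball.1 hp2
      rw [Complex.dist_eq, sub_zero] at this
      exact le_of_lt this
    exact (hcont_nu hα).mono hsub
  · -- main part
    intro δ hδpos hδlt γ hγlt
    beta_reduce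
    have hδK : δ^2 * K0 α ≤ 1/4 := hδ₀K δ hδlt
    have hγ8 : ‖γ‖ ≤ 1/8 := le_of_lt hγlt
    have hγ8' : ‖(-γ)‖ ≤ 1/8 := by rwa [norm_neg]
    have hδ0 : δ ≠ 0 := by
      intro h; rw [h] at hδpos; simp at hδpos
    have hδc : (δ:ℂ) ≠ 0 := by exact_mod_cast hδ0
    have hδ1 : |δ| ≤ 1 := le_trans (le_of_lt hδlt) hδ₀le1
    set η : ℝ := etaStar α δ with hηdef
    set s : ℝ := sfun α δ with hsdef
    have hetaq : 6*δ^2*η^2 = 1 - s := by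
      rw [hηdef, hsdef]; exact heta_sq hα hδK hδ0
    have hssq : s^2 = 1 - 12*δ^2*α := by rw [hsdef]; exact hs_sq hα hδK
    have heta_nn : 0 ≤ η := by rw [hηdef]; exact heta0
    have heta_M : η ≤ Mc α := by rw [hηdef]; exact heta_ub hα hδK
    clear_value η s
    have h2r : 3*δ^2*η^4 - η^2 + α = 0 := by
      have h2' : 12*δ^2*(3*δ^2*η^4 - η^2 + α) = 0 := by
        linear_combination (6*δ^2*η^2 + (1 - s) - 2) * hetaq + hssq
      have h12ne : (12:ℝ)*δ^2 ≠ 0 := mul_ne_zero (by norm_num) (pow_ne_zero _ hδ0)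
      exact (mul_eq_zero.mp h2').resolve_left h12ne
    have H1 : (1:ℂ) - 6*(δ:ℂ)^2*(η:ℂ)^2 = (s:ℂ) := by
      have hr : (1:ℝ) - 6*δ^2*η^2 = s := by linarith
      exact_mod_cast hr
    have H2 : 3*(δ:ℂ)^2*(η:ℂ)^4 - (η:ℂ)^2 + (α:ℂ) = 0 := by exact_mod_cast h2r
    have Hp : ((Pfun α δ : ℝ):ℂ) = (δ:ℂ)^2*(η:ℂ) := by
      rw [Pfun, ← hηdef]; push_cast; ring
    have key1 : ∀ ν : ℂ, disp α δ (cStar α δ) (γ^2) (-(η:ℂ)+ν)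
        = -(δ:ℂ)^2*ν^4 + 4*(δ:ℂ)^2*(η:ℂ)*ν^3 + (s:ℂ)*ν^2 - γ^2 := by
      intro ν
      simp only [disp, cStar, ← hηdef]
      push_cast
      linear_combination ν^2 * H1 + H2
    set n3 : ℂ := nufun α δ γ with hn3def
    set n2 : ℂ := nufun α δ (-γ) with hn2def
    have hb3 : ‖n3‖ ≤ 1/4 := by rw [hn3def]; exact hnu_mem hα hδK hγ8
    have hb2 : ‖n2‖ ≤ 1/4 := by rw [hn2def]; exact hnu_mem hα hδK hγ8'
    have hq3 : -(δ:ℂ)^2*n3^4 + 4*(δ:ℂ)^2*(η:ℂ)*n3^3 + (s:ℂ)*n3^2 - γ^2 = 0 := by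
      have hroot := hnu_root hα hδK hγ8
      rw [← hn3def] at hroot
      rw [Rfun, ← hsdef] at hroot
      linear_combination hroot - 4*n3^3*Hp
    have hq2 : -(δ:ℂ)^2*n2^4 + 4*(δ:ℂ)^2*(η:ℂ)*n2^3 + (s:ℂ)*n2^2 - γ^2 = 0 := by
      have hroot := hnu_root hα hδK hγ8'
      rw [← hn2def] at hroot
      rw [Rfun, ← hsdef] at hroot
      have hng : (-γ)^2 = γ^2 := neg_sq γ
      rw [hng] at hroot
      linear_combination hroot - 4*n2^3*Hp
    -- close bounds
    have hc3 : ‖(n3 - γ)‖ ≤ 2*(δ^2*K0 α)*‖γ‖ := by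
      have h := hnu_close hα hδK hγ8
      rw [← hn3def] at h
      exact h
    have hc2 : ‖(n2 + γ)‖ ≤ 2*(δ^2*K0 α)*‖γ‖ := by
      have h := hnu_close hα hδK hγ8'
      rw [← hn2def, sub_neg_eq_add, norm_neg] at h
      exact h
    clear_value n3 n2
    -- the two residual identities
    obtain ⟨hr1, hr0⟩ : ((n2+n3)*((s:ℂ) + (δ:ℂ)^2*(n2+n3)*(4*(η:ℂ) - (n2+n3)) + (δ:ℂ)^2*(n2*n3))
          - (n2*n3)*((δ:ℂ)^2*(4*(η:ℂ) - (n2+n3))) = 0)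
        ∧ (-γ^2 - (n2*n3)*((s:ℂ) + (δ:ℂ)^2*(n2+n3)*(4*(η:ℂ) - (n2+n3)) + (δ:ℂ)^2*(n2*n3)) = 0) := by
      by_cases hγ0 : γ = 0
      · have hz3 : n3 = 0 := by rw [hn3def, hγ0]; exact hnu_zero
        have hz2 : n2 = 0 := by rw [hn2def, hγ0, neg_zero]; exact hnu_zero
        constructor
        · rw [hz2, hz3]; ring
        · rw [hz2, hz3, hγ0]; ring
      · have hγpos : 0 < ‖γ‖ := norm_pos_iff.2 hγ0
        have hsmall : 2*(δ^2*K0 α) ≤ 1/2 := by linarith only [hδK]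
        have hne : n2 ≠ n3 := by
          intro hEq
          have hid : 2*γ = (γ - n3) + (n2 + γ) := by rw [hEq]; ring
          have h1 : ‖(2*γ)‖ ≤ ‖(γ - n3)‖ + ‖(n2 + γ)‖ := by
            rw [hid]; exact norm_add_le _ _
          have h2 : ‖(γ - n3)‖ = ‖(n3 - γ)‖ := by
            rw [← norm_neg]; ring_nf
          have h3 : ‖(2*γ)‖ = 2*‖γ‖ := by
            rw [norm_mul]; norm_num [Complex.norm_ofNat]
          have hmul : 2*(δ^2*K0 α)*‖γ‖ ≤ (1/2)*‖γ‖ :=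
            mul_le_mul_of_nonneg_right hsmall (norm_nonneg γ)
          have h4 : ‖(n3 - γ)‖ ≤ (1/2)*‖γ‖ := le_trans hc3 hmul
          have h5 : ‖(n2 + γ)‖ ≤ (1/2)*‖γ‖ := le_trans hc2 hmul
          rw [h3, h2] at h1
          linarith
        have hfac2 : n2^2 - (n2+n3)*n2 + n2*n3 = 0 := by ring
        have hfac3 : n3^2 - (n2+n3)*n3 + n2*n3 = 0 := by ring
        have hv2 : ((n2+n3)*((s:ℂ) + (δ:ℂ)^2*(n2+n3)*(4*(η:ℂ) - (n2+n3)) + (δ:ℂ)^2*(n2*n3))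
              - (n2*n3)*((δ:ℂ)^2*(4*(η:ℂ) - (n2+n3))))*n2
            + (-γ^2 - (n2*n3)*((s:ℂ) + (δ:ℂ)^2*(n2+n3)*(4*(η:ℂ) - (n2+n3)) + (δ:ℂ)^2*(n2*n3))) = 0 := by
          linear_combination hq2
        have hv3 : ((n2+n3)*((s:ℂ) + (δ:ℂ)^2*(n2+n3)*(4*(η:ℂ) - (n2+n3)) + (δ:ℂ)^2*(n2*n3))
              - (n2*n3)*((δ:ℂ)^2*(4*(η:ℂ) - (n2+n3))))*n3
            + (-γ^2 - (n2*n3)*((s:ℂ) + (δ:ℂ)^2*(n2+n3)*(4*(η:ℂ) - (n2+n3)) + (δ:ℂ)^2*(n2*n3))) = 0 := by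
          linear_combination hq3
        have hsubeq : ((n2+n3)*((s:ℂ) + (δ:ℂ)^2*(n2+n3)*(4*(η:ℂ) - (n2+n3)) + (δ:ℂ)^2*(n2*n3))
              - (n2*n3)*((δ:ℂ)^2*(4*(η:ℂ) - (n2+n3))))*(n2 - n3) = 0 := by
          linear_combination hv2 - hv3
        have hr1' := (mul_eq_zero.mp hsubeq).resolve_right (sub_ne_zero.2 hne)
        refine ⟨hr1', ?_⟩
        linear_combination hv2 - n2*hr1'
    -- z bound and square root
    have hs1 : s ≤ 1 := by rw [hsdef]; exact hs_le1 hα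
    have hsgap : 1 - s ≤ 12*δ^2*α := by rw [hsdef]; exact hs_gap hα hδK
    have habs_e : ‖(n2+n3)‖ ≤ 1/2 :=
      le_trans (norm_add_le _ _) (by linarith only [hb2, hb3])
    have habs_f : ‖(n2*n3)‖ ≤ 1/16 := by
      rw [norm_mul]
      calc ‖n2‖ * ‖n3‖ ≤ (1/4)*(1/4) :=
            mul_le_mul hb2 hb3 (norm_nonneg _) (by norm_num)
        _ = 1/16 := by norm_num
    have habs_η : ‖((η:ℝ):ℂ)‖ = η := by
      rw [Complex.norm_real, Real.norm_eq_abs, abs_of_nonneg heta_nn]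
    have habs_β : ‖(4*(η:ℂ) - (n2+n3))‖ ≤ 4*Mc α + 1/2 := by
      have h1 : ‖(4*(η:ℂ) - (n2+n3))‖
          ≤ ‖(4*(η:ℂ))‖ + ‖(n2+n3)‖ := by
        have := norm_add_le (4*(η:ℂ)) (-(n2+n3))
        rw [← sub_eq_add_neg, norm_neg] at this
        exact this
      have h2 : ‖(4*(η:ℂ))‖ = 4*η := by
        rw [norm_mul, Complex.norm_ofNat, habs_η]
      rw [h2] at h1
      linarith only [h1, heta_M, habs_e]
    have hβnn := norm_nonneg (4*(η:ℂ) - (n2+n3))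
    have hz1 : ‖((((s:ℂ) + (δ:ℂ)^2*(n2+n3)*(4*(η:ℂ) - (n2+n3)) + (δ:ℂ)^2*(n2*n3))
        + (δ:ℂ)^2*(4*(η:ℂ) - (n2+n3))^2/4) - 1)‖ ≤ δ^2 * K0 α := by
      have hrw : (((s:ℂ) + (δ:ℂ)^2*(n2+n3)*(4*(η:ℂ) - (n2+n3)) + (δ:ℂ)^2*(n2*n3))
            + (δ:ℂ)^2*(4*(η:ℂ) - (n2+n3))^2/4) - 1
          = ((s - 1 : ℝ):ℂ) + (δ:ℂ)^2*((n2+n3)*(4*(η:ℂ) - (n2+n3)) + (n2*n3)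
            + (4*(η:ℂ) - (n2+n3))^2/4) := by
        push_cast; ring
      rw [hrw]
      have t0 : ‖(((s - 1 : ℝ):ℂ))‖ = 1 - s := by
        rw [Complex.norm_real, Real.norm_eq_abs, abs_of_nonpos (by linarith)]; ring
      have tX : ‖((n2+n3)*(4*(η:ℂ) - (n2+n3)) + (n2*n3)
            + (4*(η:ℂ) - (n2+n3))^2/4)‖
          ≤ (1/2)*(4*Mc α + 1/2) + 1/16 + (4*Mc α + 1/2)^2/4 := by
        have u1 : ‖((n2+n3)*(4*(η:ℂ) - (n2+n3)))‖ ≤ (1/2)*(4*Mc α + 1/2) := by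
          rw [norm_mul]
          exact mul_le_mul habs_e habs_β hβnn (by norm_num)
        have u2 : ‖((4*(η:ℂ) - (n2+n3))^2/4)‖ ≤ (4*Mc α + 1/2)^2/4 := by
          rw [norm_div, norm_pow, Complex.norm_ofNat]
          have := pow_le_pow_left₀ hβnn habs_β 2
          linarith only [this]
        have tr1 := norm_add_le ((n2+n3)*(4*(η:ℂ) - (n2+n3))) (n2*n3)
        have tr2 := norm_add_le ((n2+n3)*(4*(η:ℂ) - (n2+n3)) + (n2*n3))
          ((4*(η:ℂ) - (n2+n3))^2/4)
        linarith only [tr1, tr2, u1, u2, habs_f]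
      have tfull := norm_add_le (((s - 1 : ℝ):ℂ))
        ((δ:ℂ)^2*((n2+n3)*(4*(η:ℂ) - (n2+n3)) + (n2*n3) + (4*(η:ℂ) - (n2+n3))^2/4))
      rw [t0, habs_d2] at tfull
      have hd2 : δ^2 * ‖((n2+n3)*(4*(η:ℂ) - (n2+n3)) + (n2*n3)
            + (4*(η:ℂ) - (n2+n3))^2/4)‖
          ≤ δ^2 * ((1/2)*(4*Mc α + 1/2) + 1/16 + (4*Mc α + 1/2)^2/4) :=
        mul_le_mul_of_nonneg_left tX (sq_nonneg δ)
      have hKcomp : 12*α + ((1/2)*(4*Mc α + 1/2) + 1/16 + (4*Mc α + 1/2)^2/4) ≤ K0 α := by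
        simp only [K0]
        nlinarith only [hMsq, hMn, hα]
      have : δ^2*(12*α + ((1/2)*(4*Mc α + 1/2) + 1/16 + (4*Mc α + 1/2)^2/4)) ≤ δ^2 * K0 α :=
        mul_le_mul_of_nonneg_left hKcomp (sq_nonneg δ)
      linarith only [tfull, hd2, hsgap, this]
    have hz2 : ‖((((s:ℂ) + (δ:ℂ)^2*(n2+n3)*(4*(η:ℂ) - (n2+n3)) + (δ:ℂ)^2*(n2*n3))
        + (δ:ℂ)^2*(4*(η:ℂ) - (n2+n3))^2/4) - 1)‖ ≤ 1/2 := le_trans hz1 (by linarith only [hδK])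
    have hzne := absD_ne hz2
    have hcsq := csqrt_sq hzne
    have hcs1 : ‖(csqrt (((s:ℂ) + (δ:ℂ)^2*(n2+n3)*(4*(η:ℂ) - (n2+n3))
          + (δ:ℂ)^2*(n2*n3)) + (δ:ℂ)^2*(4*(η:ℂ) - (n2+n3))^2/4) - 1)‖ ≤ δ^2 * K0 α :=
      le_trans (csqrt_sub_one hzne) hz1
    set w : ℂ := ((1/|δ| : ℝ):ℂ) * csqrt (((s:ℂ) + (δ:ℂ)^2*(n2+n3)*(4*(η:ℂ) - (n2+n3))
        + (δ:ℂ)^2*(n2*n3)) + (δ:ℂ)^2*(4*(η:ℂ) - (n2+n3))^2/4) with hwdef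
    clear_value w
    have hw2 : (δ:ℂ)^2 * w^2 = ((s:ℂ) + (δ:ℂ)^2*(n2+n3)*(4*(η:ℂ) - (n2+n3))
        + (δ:ℂ)^2*(n2*n3)) + (δ:ℂ)^2*(4*(η:ℂ) - (n2+n3))^2/4 := by
      have hr : ((1/|δ| : ℝ)^2 * δ^2 : ℝ) = 1 := by
        rw [div_pow, one_pow, sq_abs]
        field_simp
      have hrc : ((1/|δ| : ℝ):ℂ)^2 * (δ:ℂ)^2 = 1 := by exact_mod_cast hr
      calc (δ:ℂ)^2*w^2 = (((1/|δ| : ℝ):ℂ)^2 * (δ:ℂ)^2)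
            * (csqrt (((s:ℂ) + (δ:ℂ)^2*(n2+n3)*(4*(η:ℂ) - (n2+n3))
              + (δ:ℂ)^2*(n2*n3)) + (δ:ℂ)^2*(4*(η:ℂ) - (n2+n3))^2/4))^2 := by
            rw [hwdef]; ring
        _ = _ := by rw [hrc, one_mul, hcsq]
    have habs_inv : ‖((1/|δ| : ℝ):ℂ)‖ = 1/|δ| := by
      rw [Complex.norm_real, Real.norm_eq_abs, abs_of_nonneg (by positivity)]
    have hwc : ‖(w - ((1/|δ| : ℝ):ℂ))‖ ≤ |δ| * K0 α := by
      have hid : w - ((1/|δ| : ℝ):ℂ) = ((1/|δ| : ℝ):ℂ)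
          * (csqrt (((s:ℂ) + (δ:ℂ)^2*(n2+n3)*(4*(η:ℂ) - (n2+n3))
            + (δ:ℂ)^2*(n2*n3)) + (δ:ℂ)^2*(4*(η:ℂ) - (n2+n3))^2/4) - 1) := by
        rw [hwdef]; ring
      rw [hid, norm_mul, habs_inv]
      have hstep : (1/|δ|) * ‖(csqrt (((s:ℂ) + (δ:ℂ)^2*(n2+n3)*(4*(η:ℂ) - (n2+n3))
            + (δ:ℂ)^2*(n2*n3)) + (δ:ℂ)^2*(4*(η:ℂ) - (n2+n3))^2/4) - 1)‖
          ≤ (1/|δ|) * (δ^2 * K0 α) :=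
        mul_le_mul_of_nonneg_left hcs1 (by positivity)
      have heq : (1/|δ|) * (δ^2 * K0 α) = |δ| * K0 α := by
        have hdd : |δ| * |δ| = δ^2 := by rw [abs_mul_abs_self]; ring
        field_simp
        linear_combination (-1) * hdd
      rw [heq] at hstep
      exact hstep
    have hδK0 : |δ| * K0 α ≤ K0 α := by
      nlinarith only [hδ1, hKpos, abs_nonneg δ]
    have hβhalf : ‖((4*(η:ℂ) - (n2+n3))/2)‖ ≤ 2*Mc α + 1/4 := by
      rw [norm_div, Complex.norm_ofNat]
      linarith only [habs_β]
    refine ⟨(4*(η:ℂ) - (n2+n3))/2 - w, (4*(η:ℂ) - (n2+n3))/2 + w, ?_, ?_, ?_, ?_, ?_⟩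
    · -- factorization
      intro ν
      rw [key1 ν]
      linear_combination ν*hr1 + hr0 - (ν^2 - (n2+n3)*ν + n2*n3)*hw2
    · -- ν₁ bound
      have hid : ((4*(η:ℂ) - (n2+n3))/2 - w) + ((1/|δ| : ℝ):ℂ)
          = (4*(η:ℂ) - (n2+n3))/2 - (w - ((1/|δ| : ℝ):ℂ)) := by ring
      rw [hid]
      have htr := norm_add_le ((4*(η:ℂ) - (n2+n3))/2) (-(w - ((1/|δ| : ℝ):ℂ)))
      rw [← sub_eq_add_neg, norm_neg] at htr
      rw [hCdef]
      linarith only [htr, hβhalf, hwc, hδK0, hMn, hKpos]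
    · -- ν₄ bound
      have hid : ((4*(η:ℂ) - (n2+n3))/2 + w) - ((1/|δ| : ℝ):ℂ)
          = (4*(η:ℂ) - (n2+n3))/2 + (w - ((1/|δ| : ℝ):ℂ)) := by ring
      rw [hid]
      have htr := norm_add_le ((4*(η:ℂ) - (n2+n3))/2) (w - ((1/|δ| : ℝ):ℂ))
      rw [hCdef]
      linarith only [htr, hβhalf, hwc, hδK0, hMn, hKpos]
    · -- ν₂ bound
      have hγnn := norm_nonneg γ
      have hδnn := abs_nonneg δ
      have hsq : δ^2 = |δ| * |δ| := by rw [abs_mul_abs_self]; ring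
      have h1 : 2*(δ^2*K0 α)*‖γ‖ ≤ C*(|δ| * ‖γ‖) := by
        have e1 : 2*(δ^2*K0 α)*‖γ‖ = (2*(|δ| * K0 α))*(|δ| * ‖γ‖) := by
          rw [hsq]; ring
        rw [e1, hCdef]
        apply mul_le_mul_of_nonneg_right _ (mul_nonneg hδnn hγnn)
        linarith only [hδK0, hMn, hKpos]
      have h2 : C*(|δ| * ‖γ‖) ≤ C*(|δ| * ‖γ‖ + ‖γ‖^2) := by
        apply mul_le_mul_of_nonneg_left _ (le_of_lt hCpos)
        linarith only [sq_nonneg (‖γ‖)]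
      exact le_trans hc2 (le_trans h1 h2)
    · -- ν₃ bound
      have hγnn := norm_nonneg γ
      have hδnn := abs_nonneg δ
      have hsq : δ^2 = |δ| * |δ| := by rw [abs_mul_abs_self]; ring
      have h1 : 2*(δ^2*K0 α)*‖γ‖ ≤ C*(|δ| * ‖γ‖) := by
        have e1 : 2*(δ^2*K0 α)*‖γ‖ = (2*(|δ| * K0 α))*(|δ| * ‖γ‖) := by
          rw [hsq]; ring
        rw [e1, hCdef]
        apply mul_le_mul_of_nonneg_right _ (mul_nonneg hδnn hγnn)
        linarith only [hδK0, hMn, hKpos]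
      have h2 : C*(|δ| * ‖γ‖) ≤ C*(|δ| * ‖γ‖ + ‖γ‖^2) := by
        apply mul_le_mul_of_nonneg_left _ (le_of_lt hCpos)
        linarith only [sq_nonneg (‖γ‖)]
      exact le_trans hc3 (le_trans h1 h2)
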